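/- Let $F$ be an algebraically closed field of characteristic $2$, $\tilde G$ the Klein four group with generators $\sigma_1, \sigma_2$, and $\lambda \in F \setminus \{0,1\}$. Let $V_{2,\lambda}$ be the $2$-dimensional $\tilde G$-module with dual basis variables $x_1, y_1$ where $\sigma_i(x_1) = x_1$ for $i=1,2$, $\sigma_1(y_1) = y_1 + x_1$, $\sigma_2(y_1) = y_1 + \lambda x_1$. Then the invariant ring $F[V_{2,\lambda}]^{\tilde G}$ is generated by $x_1$ and the norm $N_{\tilde G}(y_1) = \prod_{\tau \in \tilde G} \tau(y_1)$, and consequently $\delta(\tilde G, V_{2,\lambda}) = \gamma(\tilde G, V_{2,\lambda}) = 4$. -/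

import Mathlib

open MvPolynomial

/-- Action of `σ₁` on `F[V_{2,λ}] = F[x₁, y₁]` (variable `0` is `x₁`, variable `1` is `y₁`):
`σ₁(x₁) = x₁`, `σ₁(y₁) = y₁ + x₁`. -/
noncomputable def s1Act {F : Type*} [Field F] :
    MvPolynomial (Fin 2) F →ₐ[F] MvPolynomial (Fin 2) F :=
  aeval ![X 0, X 1 + X 0]

/-- Action of `σ₂`: `σ₂(x₁) = x₁`, `σ₂(y₁) = y₁ + λ x₁`. -/
noncomputable def s2Act {F : Type*} [Field F] (lam : F) :
    MvPolynomial (Fin 2) F →ₐ[F] MvPolynomial (Fin 2) F :=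
  aeval ![X 0, X 1 + C lam * X 0]

/-- The norm `N(y₁) = ∏_{τ ∈ G̃} τ(y₁) = y₁(y₁+x₁)(y₁+λx₁)(y₁+(1+λ)x₁)` (char 2). -/
noncomputable def normY {F : Type*} [Field F] (lam : F) : MvPolynomial (Fin 2) F :=
  X 1 * (X 1 + X 0) * (X 1 + C lam * X 0) * (X 1 + C (1 + lam) * X 0)

/-- Action of `σ₁` on points of `V_{2,λ}`. -/
def p1Act {F : Type*} [Field F] (v : Fin 2 → F) : Fin 2 → F := ![v 0, v 1 + v 0]

/-- Action of `σ₂` on points of `V_{2,λ}`. -/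
def p2Act {F : Type*} [Field F] (lam : F) (v : Fin 2 → F) : Fin 2 → F :=
  ![v 0, v 1 + lam * v 0]

/-- `ε(G̃,v)` for the Klein four group acting on `V_{2,λ}`. -/
noncomputable def epsV2 {F : Type*} [Field F] (lam : F) (v : Fin 2 → F) : ℕ :=
  sInf {d : ℕ | 0 < d ∧ ∃ f : MvPolynomial (Fin 2) F,
    s1Act f = f ∧ s2Act lam f = f ∧ f.IsHomogeneous d ∧ eval v f ≠ 0}

/-- `δ(G̃, V_{2,λ})`. -/
noncomputable def deltaV2 {F : Type*} [Field F] (lam : F) : ℕ :=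
  sSup {e : ℕ | ∃ v : Fin 2 → F, v ≠ 0 ∧ p1Act v = v ∧ p2Act lam v = v ∧ e = epsV2 lam v}

/-- `γ(G̃, V_{2,λ})`. -/
noncomputable def gammaV2 {F : Type*} [Field F] (lam : F) : ℕ :=
  sSup {e : ℕ | ∃ v : Fin 2 → F, v ≠ 0 ∧ e = epsV2 lam v}

namespace Stmt10Aux

variable {F : Type*} [Field F]

/-- `Ψ : F[x,y] → (F[x])[y]`. -/
noncomputable def Psi : MvPolynomial (Fin 2) F →ₐ[F] Polynomial (Polynomial F) :=
  aeval ![Polynomial.C Polynomial.X, Polynomial.X]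

/-- `Φ : (F[x])[y] → F[x,y]`, inverse of `Ψ`. -/
noncomputable def Phi : Polynomial (Polynomial F) →ₐ[F] MvPolynomial (Fin 2) F where
  toRingHom := Polynomial.eval₂RingHom
    (Polynomial.eval₂RingHom (MvPolynomial.C) (X 0)) (X 1)
  commutes' := fun a => by
    simp [Polynomial.algebraMap_eq, MvPolynomial.algebraMap_eq]

@[simp] lemma Phi_X : Phi (Polynomial.X : Polynomial (Polynomial F)) = X 1 := by
  change Polynomial.eval₂RingHom (Polynomial.eval₂RingHom (MvPolynomial.C)
    (X 0 : MvPolynomial (Fin 2) F)) (X 1) Polynomial.X = X 1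
  simp

@[simp] lemma Phi_CX : Phi (Polynomial.C (Polynomial.X : Polynomial F)) = X 0 := by
  change Polynomial.eval₂RingHom (Polynomial.eval₂RingHom (MvPolynomial.C)
    (X 0 : MvPolynomial (Fin 2) F)) (X 1) (Polynomial.C Polynomial.X) = X 0
  simp

@[simp] lemma Phi_CC (a : F) : Phi (Polynomial.C (Polynomial.C a)) = C a := by
  change Polynomial.eval₂RingHom (Polynomial.eval₂RingHom (MvPolynomial.C)
    (X 0 : MvPolynomial (Fin 2) F)) (X 1) (Polynomial.C (Polynomial.C a)) = C a
  simp

lemma Phi_Psi (f : MvPolynomial (Fin 2) F) : Phi (Psi f) = f := by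
  have : (Phi.comp (Psi (F := F))) = AlgHom.id F _ := by
    apply MvPolynomial.algHom_ext
    intro i
    fin_cases i <;> simp [Psi]
  exact congrArg (fun (g : _ →ₐ[F] _) => g f) this

/-- Translation `y ↦ y + c` as an `F`-algebra map on `(F[x])[y]`. -/
noncomputable def Tc (c : Polynomial F) :
    Polynomial (Polynomial F) →ₐ[F] Polynomial (Polynomial F) :=
  (Polynomial.aeval (Polynomial.X + Polynomial.C c)).restrictScalars F

lemma Tc_apply (c : Polynomial F) (p : Polynomial (Polynomial F)) :
    Tc c p = p.comp (Polynomial.X + Polynomial.C c) := by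
  simp [Tc, Polynomial.comp_eq_aeval]

@[simp] lemma Tc_X (c : Polynomial F) :
    Tc c (Polynomial.X) = Polynomial.X + Polynomial.C c := by
  simp [Tc_apply]

@[simp] lemma Tc_C (c r : Polynomial F) :
    Tc c (Polynomial.C r) = Polynomial.C r := by
  simp [Tc_apply]

lemma psi_s1 (f : MvPolynomial (Fin 2) F) :
    Psi (s1Act f) = Tc Polynomial.X (Psi f) := by
  have : (Psi.comp (s1Act (F := F))) = (Tc Polynomial.X).comp Psi := by
    apply MvPolynomial.algHom_ext
    intro i
    fin_cases i <;> simp [Psi, s1Act]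
  exact congrArg (fun (g : _ →ₐ[F] _) => g f) this

lemma psi_s2 (lam : F) (f : MvPolynomial (Fin 2) F) :
    Psi (s2Act lam f) = Tc (Polynomial.C lam * Polynomial.X) (Psi f) := by
  have : (Psi.comp (s2Act lam (F := F))) = (Tc (Polynomial.C lam * Polynomial.X)).comp Psi := by
    apply MvPolynomial.algHom_ext
    intro i
    fin_cases i <;> simp [Psi, s2Act]
  exact congrArg (fun (g : _ →ₐ[F] _) => g f) this


noncomputable def Nb (lam : F) : Polynomial (Polynomial F) :=
  Polynomial.X * (Polynomial.X + Polynomial.C Polynomial.X) *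
    (Polynomial.X + Polynomial.C (Polynomial.C lam * Polynomial.X)) *
    (Polynomial.X + Polynomial.C (Polynomial.X + Polynomial.C lam * Polynomial.X))

lemma monic_Nb (lam : F) : (Nb lam).Monic := by
  unfold Nb
  exact ((Polynomial.monic_X.mul (Polynomial.monic_X_add_C _)).mul
    (Polynomial.monic_X_add_C _)).mul (Polynomial.monic_X_add_C _)

lemma natDegree_Nb (lam : F) : (Nb lam).natDegree = 4 := by
  unfold Nb
  rw [(((Polynomial.monic_X.mul (Polynomial.monic_X_add_C _)).mul
      (Polynomial.monic_X_add_C _))).natDegree_mul (Polynomial.monic_X_add_C _),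
    ((Polynomial.monic_X.mul (Polynomial.monic_X_add_C _))).natDegree_mul
      (Polynomial.monic_X_add_C _),
    (Polynomial.monic_X).natDegree_mul (Polynomial.monic_X_add_C _)]
  rw [Polynomial.natDegree_X, Polynomial.natDegree_X_add_C, Polynomial.natDegree_X_add_C,
    Polynomial.natDegree_X_add_C]

lemma two_eq_zero_A [CharP F 2] : (2 : Polynomial (Polynomial F)) = 0 := by
  have h : (2 : F) = 0 := by
    have := CharP.cast_eq_zero F 2
    simpa using this
  calc (2 : Polynomial (Polynomial F))
      = algebraMap F _ (2 : F) := by rw [map_ofNat]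
    _ = 0 := by rw [h, map_zero]


lemma Tc_Nb_1 [CharP F 2] (lam : F) : Tc Polynomial.X (Nb lam) = Nb lam := by
  have h2 : (2 : Polynomial (Polynomial F)) = 0 := two_eq_zero_A
  simp only [Tc_apply, Nb, Polynomial.mul_comp, Polynomial.add_comp, Polynomial.X_comp,
    Polynomial.C_comp, map_mul, map_add]
  set yy := (Polynomial.X : Polynomial (Polynomial F)) with hyy
  set xx := Polynomial.C (Polynomial.X : Polynomial F) with hxx
  set ll := Polynomial.C (Polynomial.C lam) with hll
  linear_combination (2*xx*yy^3 + 6*xx^2*yy^2 + 3*xx^2*yy^2*ll + 6*xx^3*yy + 6*xx^3*yy*ll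
    + xx^3*yy*ll^2 + 2*xx^4 + 3*xx^4*ll + xx^4*ll^2) * h2

lemma Tc_Nb_2 [CharP F 2] (lam : F) :
    Tc (Polynomial.C lam * Polynomial.X) (Nb lam) = Nb lam := by
  have h2 : (2 : Polynomial (Polynomial F)) = 0 := two_eq_zero_A
  simp only [Tc_apply, Nb, Polynomial.mul_comp, Polynomial.add_comp, Polynomial.X_comp,
    Polynomial.C_comp, map_mul, map_add]
  set yy := (Polynomial.X : Polynomial (Polynomial F)) with hyy
  set xx := Polynomial.C (Polynomial.X : Polynomial F) with hxx
  set ll := Polynomial.C (Polynomial.C lam) with hll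
  linear_combination (2*xx*yy^3*ll + 3*xx^2*yy^2*ll + 6*xx^2*yy^2*ll^2 + xx^3*yy*ll
    + 6*xx^3*yy*ll^2 + 6*xx^3*yy*ll^3 + xx^4*ll^2 + 3*xx^4*ll^3 + 2*xx^4*ll^4) * h2


lemma eval_shift {c : Polynomial F} {r : Polynomial (Polynomial F)}
    (h : Tc c r = r) (t : Polynomial F) : r.eval (t + c) = r.eval t := by
  conv_rhs => rw [← h, Tc_apply]
  simp [Polynomial.eval_comp, add_comm]

lemma const_of_inv [CharP F 2] {lam : F} (h0 : lam ≠ 0) (h1 : lam ≠ 1)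
    {r : Polynomial (Polynomial F)} (hdeg : r.natDegree < 4)
    (i1 : Tc Polynomial.X r = r) (i2 : Tc (Polynomial.C lam * Polynomial.X) r = r) :
    ∃ c : Polynomial F, r = Polynomial.C c := by
  classical
  have h2 : (2 : F) = 0 := by simpa using CharP.cast_eq_zero F 2
  -- evaluations agree at the four points
  have e1 : r.eval Polynomial.X = r.eval 0 := by
    simpa using eval_shift i1 0
  have e2 : r.eval (Polynomial.C lam * Polynomial.X) = r.eval 0 := by
    simpa using eval_shift i2 0
  have e3 : r.eval (Polynomial.C (lam + 1) * Polynomial.X) = r.eval 0 := by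
    have := eval_shift i1 (Polynomial.C lam * Polynomial.X)
    rw [e2] at this
    rw [← this]
    congr 1
    simp [map_add]
    ring
  set s : Polynomial (Polynomial F) := r - Polynomial.C (r.eval 0) with hs
  have hroot : ∀ u : Polynomial F, r.eval u = r.eval 0 → s.IsRoot u := by
    intro u hu
    simp [hs, Polynomial.IsRoot, hu]
  rcases eq_or_ne s 0 with h | h
  · exact ⟨r.eval 0, sub_eq_zero.mp h⟩
  · exfalso
    -- four distinct roots
    have hlam1 : lam + 1 ≠ 0 := fun hc => h1 (by linear_combination hc - h2)
    have d03 : (0 : F) ≠ lam + 1 := fun hc => hlam1 hc.symm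
    have d13 : (1 : F) ≠ lam + 1 := fun hc => h0 (by linear_combination -hc)
    have d23 : lam ≠ lam + 1 := fun hc => one_ne_zero (α := F) (by linear_combination -hc)
    have hco : ({0, 1, lam, lam + 1} : Finset F).card = 4 := by
      rw [Finset.card_insert_of_notMem (by
          simp only [Finset.mem_insert, Finset.mem_singleton]
          push_neg
          exact ⟨zero_ne_one, Ne.symm h0, d03⟩),
        Finset.card_insert_of_notMem (by
          simp only [Finset.mem_insert, Finset.mem_singleton]
          push_neg
          exact ⟨fun hc => h1 hc.symm, d13⟩),
        Finset.card_insert_of_notMem (by simpa using d23),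
        Finset.card_singleton]
    have hinj : Set.InjOn (fun c : F => Polynomial.C c * Polynomial.X)
        ↑({0, 1, lam, lam + 1} : Finset F) := fun a _ b _ hab => by
      simpa using congrArg (fun p => Polynomial.coeff p 1) hab
    have hcard2 : (({0, 1, lam, lam + 1} : Finset F).image
        fun c => Polynomial.C c * Polynomial.X).card = 4 := by
      rw [Finset.card_image_of_injOn hinj, hco]
    have hsub : (({0, 1, lam, lam + 1} : Finset F).image
        fun c => Polynomial.C c * Polynomial.X) ⊆ s.roots.toFinset := by
      intro u hu
      rw [Multiset.mem_toFinset, Polynomial.mem_roots']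
      simp only [Finset.mem_image, Finset.mem_insert, Finset.mem_singleton] at hu
      obtain ⟨c, hc, rfl⟩ := hu
      rcases hc with rfl | rfl | rfl | rfl
      · exact ⟨h, hroot _ (by simp)⟩
      · exact ⟨h, hroot _ (by simpa using e1)⟩
      · exact ⟨h, hroot _ e2⟩
      · exact ⟨h, hroot _ e3⟩
    have hge : 4 ≤ s.natDegree := by
      calc 4 = _ := hcard2.symm
        _ ≤ s.roots.toFinset.card := Finset.card_le_card hsub
        _ ≤ Multiset.card s.roots := s.roots.toFinset_card_le
        _ ≤ s.natDegree := s.card_roots'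
    have hle : s.natDegree ≤ 3 := by
      refine le_trans (Polynomial.natDegree_sub_le _ _) ?_
      simp only [Polynomial.natDegree_C, max_le_iff]
      omega
    omega


lemma C_mem_adjoin (lam : F) (c : Polynomial F) :
    (Polynomial.C c : Polynomial (Polynomial F)) ∈
      Algebra.adjoin F {Polynomial.C (Polynomial.X : Polynomial F), Nb lam} := by
  have hEq : (IsScalarTower.toAlgHom F (Polynomial F) (Polynomial (Polynomial F))) =
      Polynomial.aeval (Polynomial.C (Polynomial.X : Polynomial F)) := by
    apply Polynomial.algHom_ext
    simp [Polynomial.algebraMap_eq]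
  have h1 : (Polynomial.C c : Polynomial (Polynomial F)) =
      Polynomial.aeval (Polynomial.C (Polynomial.X : Polynomial F)) c := by
    calc (Polynomial.C c : Polynomial (Polynomial F))
        = IsScalarTower.toAlgHom F (Polynomial F) (Polynomial (Polynomial F)) c := by
          simp [Polynomial.algebraMap_eq]
      _ = _ := by rw [hEq]
  rw [h1]
  have hmem : Polynomial.aeval (Polynomial.C (Polynomial.X : Polynomial F)) c ∈
      Algebra.adjoin F {Polynomial.C (Polynomial.X : Polynomial F)} := by
    rw [Algebra.adjoin_singleton_eq_range_aeval]
    exact ⟨c, rfl⟩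
  exact Algebra.adjoin_mono (by simp) hmem

lemma mem_adjoin_of_inv [CharP F 2] {lam : F} (h0 : lam ≠ 0) (h1 : lam ≠ 1) :
    ∀ n (p : Polynomial (Polynomial F)), p.natDegree ≤ n →
      Tc Polynomial.X p = p → Tc (Polynomial.C lam * Polynomial.X) p = p →
      p ∈ Algebra.adjoin F {Polynomial.C (Polynomial.X : Polynomial F), Nb lam} := by
  intro n
  induction n using Nat.strong_induction_on with
  | _ n IH =>
    intro p hn hp1 hp2
    rcases lt_or_ge p.natDegree 4 with hlt | hge
    · obtain ⟨c, rfl⟩ := const_of_inv h0 h1 hlt hp1 hp2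
      exact C_mem_adjoin lam c
    · have hm := monic_Nb (lam := lam)
      have hdegNb : (Nb lam).degree = ((4 : ℕ) : WithBot ℕ) := by
        rw [Polynomial.degree_eq_natDegree hm.ne_zero, natDegree_Nb]
      set q := p /ₘ Nb lam with hq
      set r := p %ₘ Nb lam with hr
      have hsum : r + Nb lam * q = p := Polynomial.modByMonic_add_div p (Nb lam)
      have hrdeg : r.degree < (Nb lam).degree := Polynomial.degree_modByMonic_lt p hm
      have hr4 : r.natDegree < 4 := by
        rcases eq_or_ne r 0 with h0' | h0'
        · simp [h0']
        · refine (Polynomial.natDegree_lt_iff_degree_lt h0').mpr ?_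
          rw [← hdegNb]
          exact hrdeg
      have key : ∀ c : Polynomial F, Tc c (Nb lam) = Nb lam → Tc c p = p →
          Tc c q = q ∧ Tc c r = r := by
        intro c hN hp
        have e1 : Tc c r + Nb lam * Tc c q = p := by
          conv_lhs => rw [← hN]
          rw [← map_mul, ← map_add, hsum, hp]
        have e2 : (Tc c r).degree < (Nb lam).degree := by
          have hnd : (Tc c r).natDegree = r.natDegree := by
            rw [Tc_apply, ← Polynomial.taylor_apply, Polynomial.natDegree_taylor]
          refine lt_of_le_of_lt Polynomial.degree_le_natDegree ?_
          rw [hnd, hdegNb]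
          exact_mod_cast hr4
        have hdiv : p /ₘ Nb lam = Tc c q ∧ p %ₘ Nb lam = Tc c r :=
          Polynomial.div_modByMonic_unique _ _ hm ⟨e1, e2⟩
        exact ⟨hdiv.1.symm, hdiv.2.symm⟩
      obtain ⟨hq1, hr1⟩ := key _ (Tc_Nb_1 lam) hp1
      obtain ⟨hq2, hr2⟩ := key _ (Tc_Nb_2 lam) hp2
      obtain ⟨c, hc⟩ := const_of_inv h0 h1 hr4 hr1 hr2
      have hqn : q.natDegree < n := by
        rw [hq, Polynomial.natDegree_divByMonic p hm, natDegree_Nb]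
        omega
      have hqmem := IH q.natDegree hqn q le_rfl hq1 hq2
      rw [← hsum, hc]
      exact add_mem (C_mem_adjoin lam c)
        (mul_mem (Algebra.subset_adjoin (by simp)) hqmem)

lemma two_eq_zero_M [CharP F 2] : (2 : MvPolynomial (Fin 2) F) = 0 := by
  have h : (2 : F) = 0 := by simpa using CharP.cast_eq_zero F 2
  calc (2 : MvPolynomial (Fin 2) F)
      = algebraMap F _ (2 : F) := by rw [map_ofNat]
    _ = 0 := by rw [h, map_zero]

lemma Phi_Nb (lam : F) : Phi (Nb lam) = normY lam := by
  simp only [Nb, map_mul, map_add, Phi_X, Phi_CX, Phi_CC]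
  unfold normY
  rw [map_add, MvPolynomial.C_1]
  ring

lemma s1_normY [CharP F 2] (lam : F) : s1Act (normY lam) = normY lam := by
  have h2 : (2 : MvPolynomial (Fin 2) F) = 0 := two_eq_zero_M
  simp only [normY, map_mul, map_add, map_one, s1Act, aeval_X, aeval_C,
    MvPolynomial.algebraMap_eq, MvPolynomial.C_1, Matrix.cons_val_zero, Matrix.cons_val_one,
    Matrix.head_cons]
  set yy := (X 1 : MvPolynomial (Fin 2) F) with hyy
  set xx := (X 0 : MvPolynomial (Fin 2) F) with hxx
  set ll := (C lam : MvPolynomial (Fin 2) F) with hll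
  linear_combination (2*xx*yy^3 + 6*xx^2*yy^2 + 3*xx^2*yy^2*ll + 6*xx^3*yy + 6*xx^3*yy*ll
    + xx^3*yy*ll^2 + 2*xx^4 + 3*xx^4*ll + xx^4*ll^2) * h2

lemma s2_normY [CharP F 2] (lam : F) : s2Act lam (normY lam) = normY lam := by
  have h2 : (2 : MvPolynomial (Fin 2) F) = 0 := two_eq_zero_M
  simp only [normY, map_mul, map_add, map_one, s2Act, aeval_X, aeval_C,
    MvPolynomial.algebraMap_eq, MvPolynomial.C_1, Matrix.cons_val_zero, Matrix.cons_val_one,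
    Matrix.head_cons]
  set yy := (X 1 : MvPolynomial (Fin 2) F) with hyy
  set xx := (X 0 : MvPolynomial (Fin 2) F) with hxx
  set ll := (C lam : MvPolynomial (Fin 2) F) with hll
  linear_combination (2*xx*yy^3*ll + 3*xx^2*yy^2*ll + 6*xx^2*yy^2*ll^2 + xx^3*yy*ll
    + 6*xx^3*yy*ll^2 + 6*xx^3*yy*ll^3 + xx^4*ll^2 + 3*xx^4*ll^3 + 2*xx^4*ll^4) * h2

@[simp] lemma s1_X0 : s1Act (X 0 : MvPolynomial (Fin 2) F) = X 0 := by simp [s1Act]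
@[simp] lemma s2_X0 (lam : F) : s2Act lam (X 0 : MvPolynomial (Fin 2) F) = X 0 := by
  simp [s2Act]

theorem inv_iff [CharP F 2] {lam : F} (h0 : lam ≠ 0) (h1 : lam ≠ 1)
    (f : MvPolynomial (Fin 2) F) :
    (s1Act f = f ∧ s2Act lam f = f) ↔ f ∈ Algebra.adjoin F {X 0, normY lam} := by
  constructor
  · rintro ⟨hf1, hf2⟩
    have hp1 : Tc Polynomial.X (Psi f) = Psi f := by rw [← psi_s1, hf1]
    have hp2 : Tc (Polynomial.C lam * Polynomial.X) (Psi f) = Psi f := by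
      rw [← psi_s2, hf2]
    have hmem := mem_adjoin_of_inv h0 h1 (Psi f).natDegree (Psi f) le_rfl hp1 hp2
    have hf : f = Phi (Psi f) := (Phi_Psi f).symm
    rw [hf]
    have h2 : Phi (Psi f) ∈ (Algebra.adjoin F
        {Polynomial.C (Polynomial.X : Polynomial F), Nb lam}).map Phi := ⟨_, hmem, rfl⟩
    rw [AlgHom.map_adjoin] at h2
    have himg : (Phi (F := F)) '' {Polynomial.C Polynomial.X, Nb lam} = {X 0, normY lam} := by
      rw [Set.image_insert_eq, Set.image_singleton, Phi_CX, Phi_Nb]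
    rwa [himg] at h2
  · intro hmem
    have key : Algebra.adjoin F {(X 0 : MvPolynomial (Fin 2) F), normY lam} ≤
        AlgHom.equalizer s1Act (AlgHom.id F _) ⊓
          AlgHom.equalizer (s2Act lam) (AlgHom.id F _) := by
      apply Algebra.adjoin_le
      rintro g (rfl | rfl)
      · exact ⟨by simp [AlgHom.mem_equalizer], by simp [AlgHom.mem_equalizer]⟩
      · exact ⟨by simp [AlgHom.mem_equalizer, s1_normY],
          by simp [AlgHom.mem_equalizer, s2_normY]⟩
    have := key hmem
    exact ⟨this.1, this.2⟩

lemma normY_homog (lam : F) : (normY lam).IsHomogeneous 4 := by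
  have h1 : (X 1 : MvPolynomial (Fin 2) F).IsHomogeneous 1 := isHomogeneous_X _ _
  have hc : ∀ c : F, ((C c * X 0 : MvPolynomial (Fin 2) F)).IsHomogeneous 1 := by
    intro c
    simpa using (isHomogeneous_C (Fin 2) c).mul (isHomogeneous_X F 0)
  have f2 : ((X 1 + X 0 : MvPolynomial (Fin 2) F)).IsHomogeneous 1 :=
    h1.add (isHomogeneous_X _ _)
  have f3 := h1.add (hc lam)
  have f4 := h1.add (hc (1 + lam))
  simpa [normY] using ((h1.mul f2).mul f3).mul f4

lemma eval_zero_small [CharP F 2] {lam : F} {f : MvPolynomial (Fin 2) F} {d : ℕ}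
    (hmem : f ∈ Algebra.adjoin F {X 0, normY lam})
    (hhom : f.IsHomogeneous d) (hd : ¬ (4 ∣ d)) (t : F) :
    eval ![(0 : F), t] f = 0 := by
  classical
  set φ : MvPolynomial (Fin 2) F →ₐ[F] Polynomial F := aeval ![0, Polynomial.X] with hφ
  have hexp : ∃ h : Polynomial F, φ f = Polynomial.expand F 4 h := by
    have h2 : φ f ∈ (Algebra.adjoin F
        {(X 0 : MvPolynomial (Fin 2) F), normY lam}).map φ := ⟨f, hmem, rfl⟩
    rw [AlgHom.map_adjoin] at h2
    have himg : φ '' {X 0, normY lam} = {0, Polynomial.X ^ 4} := by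
      rw [Set.image_insert_eq, Set.image_singleton]
      have e1 : φ (X 0) = 0 := by simp [hφ]
      have e2 : φ (normY lam) = Polynomial.X ^ 4 := by
        simp [hφ, normY]
        ring
      rw [e1, e2]
    rw [himg] at h2
    have h3 : φ f ∈ Algebra.adjoin F {(Polynomial.X : Polynomial F) ^ 4} := by
      refine Algebra.adjoin_le ?_ h2
      rintro g (rfl | rfl)
      · exact zero_mem _
      · exact Algebra.subset_adjoin rfl
    rw [Algebra.adjoin_singleton_eq_range_aeval] at h3
    obtain ⟨h, hh⟩ := h3
    refine ⟨h, ?_⟩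
    rw [← hh, Polynomial.expand_eq_comp_X_pow, Polynomial.comp_eq_aeval]
    rfl
  obtain ⟨h, hh⟩ := hexp
  have hzero : φ f = 0 := by
    apply Polynomial.ext
    intro k
    rw [Polynomial.coeff_zero]
    rcases eq_or_ne k d with rfl | hk
    · rw [hh, Polynomial.coeff_expand (by norm_num)]
      rw [if_neg hd]
    · conv_lhs => rw [hφ, f.as_sum]
      rw [map_sum, Polynomial.finset_sum_coeff]
      apply Finset.sum_eq_zero
      intro u hu
      rw [aeval_monomial]
      have hprod : (u.prod fun i k => (![0, Polynomial.X] : Fin 2 → Polynomial F) i ^ k)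
          = (0 : Polynomial F) ^ (u 0) * Polynomial.X ^ (u 1) := by
        rw [Finsupp.prod_fintype]
        · rw [Fin.prod_univ_two]
          simp
        · intro i; exact pow_zero _
      rw [hprod]
      rcases Nat.eq_zero_or_pos (u 0) with hu0 | hu0
      · have hdeg' : u.degree = d := by
          by_contra hne
          exact mem_support_iff.mp hu (hhom.coeff_eq_zero hne)
        have hdeg2 : u.degree = u 0 + u 1 := by
          rw [Finsupp.degree_apply, Finset.sum_subset (Finset.subset_univ _)
            (fun i _ hi => by simpa using Finsupp.notMem_support_iff.mp hi),
            Fin.sum_univ_two]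
        have hu1 : u 1 = d := by omega
        rw [hu0, pow_zero, one_mul, hu1]
        simp [Polynomial.coeff_X_pow, hk]
      · rw [zero_pow (by omega), zero_mul, mul_zero, Polynomial.coeff_zero]
  have hB : eval ![(0 : F), t] f = Polynomial.eval t (φ f) := by
    have hcomp : (Polynomial.evalRingHom t).comp
        (φ : MvPolynomial (Fin 2) F →+* Polynomial F) = (eval ![(0 : F), t]) := by
      apply MvPolynomial.ringHom_ext
      · intro a; simp [hφ]
      · intro i; fin_cases i <;> simp [hφ]
    exact (RingHom.congr_fun hcomp f).symm
  rw [hB, hzero, Polynomial.eval_zero]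


lemma eps_at_fixed [CharP F 2] {lam : F} (h0 : lam ≠ 0) (h1 : lam ≠ 1) {t : F} (ht : t ≠ 0) :
    epsV2 lam ![0, t] = 4 := by
  unfold epsV2
  have hmem4 : 4 ∈ {d : ℕ | 0 < d ∧ ∃ f : MvPolynomial (Fin 2) F,
      s1Act f = f ∧ s2Act lam f = f ∧ f.IsHomogeneous d ∧ eval ![(0 : F), t] f ≠ 0} := by
    refine ⟨by norm_num, normY lam, s1_normY lam, s2_normY lam, normY_homog lam, ?_⟩
    have he : eval ![(0 : F), t] (normY lam) = t ^ 4 := by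
      simp [normY]
      ring
    rw [he]
    exact pow_ne_zero _ ht
  refine le_antisymm (Nat.sInf_le hmem4) (le_csInf ⟨4, hmem4⟩ ?_)
  rintro d ⟨hd0, f, hf1, hf2, hhom, hne⟩
  by_contra hlt
  push_neg at hlt
  have hdvd : ¬ (4 ∣ d) := fun hdvd => absurd (Nat.le_of_dvd hd0 hdvd) (by omega)
  exact hne (eval_zero_small ((inv_iff h0 h1 f).mp ⟨hf1, hf2⟩) hhom hdvd t)

lemma eps_le_four [CharP F 2] {lam : F} (h0 : lam ≠ 0) (h1 : lam ≠ 1)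
    {v : Fin 2 → F} (hv : v ≠ 0) : epsV2 lam v ≤ 4 := by
  rcases eq_or_ne (v 0) 0 with hv0 | hv0
  · have hv1 : v 1 ≠ 0 := by
      intro hv1
      apply hv
      funext i
      fin_cases i
      · simpa using hv0
      · simpa using hv1
    have hveq : v = ![0, v 1] := by
      funext i
      fin_cases i <;> simp [hv0]
    rw [hveq, eps_at_fixed h0 h1 hv1]
  · have hmem1 : 1 ∈ {d : ℕ | 0 < d ∧ ∃ f : MvPolynomial (Fin 2) F,
        s1Act f = f ∧ s2Act lam f = f ∧ f.IsHomogeneous d ∧ eval v f ≠ 0} :=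
      ⟨one_pos, X 0, s1_X0, s2_X0 lam, isHomogeneous_X _ _, by simpa using hv0⟩
    calc epsV2 lam v ≤ 1 := Nat.sInf_le hmem1
      _ ≤ 4 := by norm_num

end Stmt10Aux

theorem stmt10 {F : Type*} [Field F] [IsAlgClosed F] [CharP F 2]
    (lam : F) (h0 : lam ≠ 0) (h1 : lam ≠ 1) :
    (∀ f : MvPolynomial (Fin 2) F,
      (s1Act f = f ∧ s2Act lam f = f) ↔ f ∈ Algebra.adjoin F {X 0, normY lam}) ∧
    deltaV2 (F := F) lam = 4 ∧ gammaV2 (F := F) lam = 4 := by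
  refine ⟨fun f => Stmt10Aux.inv_iff h0 h1 f, ?_, ?_⟩
  · have hset : {e : ℕ | ∃ v : Fin 2 → F, v ≠ 0 ∧ p1Act v = v ∧ p2Act lam v = v ∧
        e = epsV2 lam v} = {4} := by
      ext e
      simp only [Set.mem_setOf_eq, Set.mem_singleton_iff]
      constructor
      · rintro ⟨v, hv, hf1, hf2, rfl⟩
        have hv0 : v 0 = 0 := by
          have h := congrFun hf1 1
          simp only [p1Act, Matrix.cons_val_one, Matrix.head_cons, Matrix.cons_val_zero] at h
          linear_combination h
        have hv1 : v 1 ≠ 0 := by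
          intro h
          apply hv
          funext i
          fin_cases i
          · simpa using hv0
          · simpa using h
        have hveq : v = ![0, v 1] := by
          funext i
          fin_cases i <;> simp [hv0]
        rw [hveq]
        exact Stmt10Aux.eps_at_fixed h0 h1 hv1
      · rintro rfl
        refine ⟨![0, 1], ?_, ?_, ?_, ?_⟩
        · intro h
          exact one_ne_zero (α := F) (by simpa using congrFun h 1)
        · funext i; fin_cases i <;> simp [p1Act]
        · funext i; fin_cases i <;> simp [p2Act]
        · exact (Stmt10Aux.eps_at_fixed h0 h1 one_ne_zero).symm
    rw [deltaV2, hset, csSup_singleton]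
  · have hmem : 4 ∈ {e : ℕ | ∃ v : Fin 2 → F, v ≠ 0 ∧ e = epsV2 lam v} :=
      ⟨![0, 1], by intro h; exact one_ne_zero (α := F) (by simpa using congrFun h 1),
        (Stmt10Aux.eps_at_fixed h0 h1 one_ne_zero).symm⟩
    have hub : ∀ e ∈ {e : ℕ | ∃ v : Fin 2 → F, v ≠ 0 ∧ e = epsV2 lam v}, e ≤ 4 := by
      rintro e ⟨v, hv, rfl⟩
      exact Stmt10Aux.eps_le_four h0 h1 hv
    rw [gammaV2]
    exact le_antisymm (csSup_le ⟨4, hmem⟩ hub) (le_csSup ⟨4, hub⟩ hmem)
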